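/- arXiv:1708.09729 — 2 statements merged into one kernel-verified Lean document; each statement's English description precedes it below -/
import Mathlib

section
/- Let V be a finite-dimensional complex vector space, W a finite subgroup of GL(V), and U a linear subspace of V. Let W_U = {w ∈ W : w u = u for all u ∈ U} be the pointwise stabilizer of U, and let r = dim_ℂ V − dim_ℂ V^{W_U}, where V^{W_U} = {v ∈ V : w v = v for all w ∈ W_U}. Then for every z in the center of ℂW_U (viewed in ℂW), the element Tr_{W_U}^W(z) = (1/|W_U|) Σ_{g∈W} g z g⁻¹ lies in Z(ℂW) ∩ F_r(ℂW). -/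
/-- The fixed subspace `V^w = {v ∈ V | w v = v}` of an element `w` of a subgroup `W` of
`GL(V)`. -/
noncomputable def fixedSpace {V : Type*} [AddCommGroup V] [Module ℂ V]
    (W : Subgroup (V →ₗ[ℂ] V)ˣ) (w : W) : Submodule ℂ V :=
  LinearMap.eqLocus ((w : (V →ₗ[ℂ] V)ˣ) : V →ₗ[ℂ] V) LinearMap.id

/-- `cod(w) = dim V − dim V^w`. -/
noncomputable def cod {V : Type*} [AddCommGroup V] [Module ℂ V]
    (W : Subgroup (V →ₗ[ℂ] V)ˣ) (w : W) : ℕ :=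
  Module.finrank ℂ V - Module.finrank ℂ (fixedSpace W w)

/-- `F_i(ℂW)`: the ℂ-span in the group algebra `ℂW` of the group elements `w` with
`cod(w) ≤ i`. -/
noncomputable def filt {V : Type*} [AddCommGroup V] [Module ℂ V]
    (W : Subgroup (V →ₗ[ℂ] V)ˣ) (i : ℕ) : Submodule ℂ (MonoidAlgebra ℂ W) :=
  Submodule.span ℂ {x | ∃ w : W, cod W w ≤ i ∧ x = MonoidAlgebra.of ℂ W w}

/-- The pointwise stabilizer `W_U = {w ∈ W | ∀ u ∈ U, w u = u}` of a subspace `U ⊆ V`. -/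
def fixator {V : Type*} [AddCommGroup V] [Module ℂ V]
    (W : Subgroup (V →ₗ[ℂ] V)ˣ) (U : Submodule ℂ V) : Subgroup W where
  carrier := {w : W | ∀ u ∈ U, ((w : (V →ₗ[ℂ] V)ˣ) : V →ₗ[ℂ] V) u = u}
  one_mem' := by intro u hu; simp
  mul_mem' := by
    intro a b ha hb u hu
    simp only [Subgroup.coe_mul, Units.val_mul, Module.End.mul_apply]
    rw [hb u hu, ha u hu]
  inv_mem' := by
    intro a ha u hu
    conv_lhs => rw [← ha u hu]
    rw [← Module.End.mul_apply, ← Units.val_mul, ← Subgroup.coe_mul, inv_mul_cancel]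
    simp

/-- The fixed subspace `V^H = {v ∈ V | ∀ w ∈ H, w v = v}` of a subgroup `H ≤ W`. -/
noncomputable def groupFixed {V : Type*} [AddCommGroup V] [Module ℂ V]
    (W : Subgroup (V →ₗ[ℂ] V)ˣ) (H : Subgroup W) : Submodule ℂ V :=
  ⨅ w : H, fixedSpace W (w : W)

/-- The truncated induction (transfer) map `Tr_H^W : ℂW → ℂW`,
`z ↦ (1/|H|) Σ_{g ∈ W} g z g⁻¹`, as a ℂ-linear endomorphism of `ℂW`. -/
noncomputable def TrMap {V : Type*} [AddCommGroup V] [Module ℂ V]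
    (W : Subgroup (V →ₗ[ℂ] V)ˣ) [Fintype W] (H : Subgroup W) :
    MonoidAlgebra ℂ W →ₗ[ℂ] MonoidAlgebra ℂ W :=
  (Nat.card H : ℂ)⁻¹ •
    ∑ g : W,
      (LinearMap.mulLeft ℂ (MonoidAlgebra.of ℂ W g)).comp
        (LinearMap.mulRight ℂ (MonoidAlgebra.of ℂ W g⁻¹))

/-- The inclusion `ℂH → ℂW` of group algebras induced by the inclusion of a subgroup
`H ≤ W`. -/
noncomputable def subgroupAlgebraIncl {V : Type*} [AddCommGroup V] [Module ℂ V]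
    (W : Subgroup (V →ₗ[ℂ] V)ˣ) (H : Subgroup W) :
    MonoidAlgebra ℂ H →ₐ[ℂ] MonoidAlgebra ℂ W :=
  MonoidAlgebra.mapDomainAlgHom ℂ ℂ H.subtype

section Aux

variable {V : Type*} [AddCommGroup V] [Module ℂ V]

/-- The linear endomorphism of `V` determined by an element of `W`. -/
noncomputable def lmap (W : Subgroup (V →ₗ[ℂ] V)ˣ) (g : W) : V →ₗ[ℂ] V :=
  ((g : (V →ₗ[ℂ] V)ˣ) : V →ₗ[ℂ] V)

lemma lmap_mul_apply (W : Subgroup (V →ₗ[ℂ] V)ˣ) (g h : W) (v : V) :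
    lmap W (g * h) v = lmap W g (lmap W h v) := rfl

lemma lmap_one_apply (W : Subgroup (V →ₗ[ℂ] V)ˣ) (v : V) : lmap W 1 v = v := rfl

lemma lmap_apply_inv_apply (W : Subgroup (V →ₗ[ℂ] V)ˣ) (g : W) (v : V) :
    lmap W g (lmap W g⁻¹ v) = v := by
  rw [← lmap_mul_apply, mul_inv_cancel, lmap_one_apply]

lemma lmap_inv_apply_apply (W : Subgroup (V →ₗ[ℂ] V)ˣ) (g : W) (v : V) :
    lmap W g⁻¹ (lmap W g v) = v := by
  rw [← lmap_mul_apply, inv_mul_cancel, lmap_one_apply]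

lemma mem_fixedSpace_iff (W : Subgroup (V →ₗ[ℂ] V)ˣ) (w : W) (v : V) :
    v ∈ fixedSpace W w ↔ lmap W w v = v := Iff.rfl

lemma fixedSpace_conj (W : Subgroup (V →ₗ[ℂ] V)ˣ) (g w : W) :
    fixedSpace W (g * w * g⁻¹) = (fixedSpace W w).map (lmap W g) := by
  ext v
  rw [mem_fixedSpace_iff]
  constructor
  · intro hv
    refine ⟨lmap W g⁻¹ v, ?_, lmap_apply_inv_apply W g v⟩
    show lmap W w (lmap W g⁻¹ v) = lmap W g⁻¹ v
    have hv' : lmap W g (lmap W w (lmap W g⁻¹ v)) = v := by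
      rw [← lmap_mul_apply, ← lmap_mul_apply]; exact hv
    conv_rhs => rw [← hv', lmap_inv_apply_apply]
  · rintro ⟨u, hu, rfl⟩
    have hu' : lmap W w u = u := hu
    rw [lmap_mul_apply, lmap_mul_apply, lmap_inv_apply_apply, hu']

lemma cod_conj (W : Subgroup (V →ₗ[ℂ] V)ˣ) (g w : W) :
    cod W (g * w * g⁻¹) = cod W w := by
  unfold cod
  congr 1
  rw [fixedSpace_conj]
  have : lmap W g
      = (LinearMap.GeneralLinearGroup.generalLinearEquiv ℂ V (g : (V →ₗ[ℂ] V)ˣ) :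
          V →ₗ[ℂ] V) := by
    rw [LinearMap.GeneralLinearGroup.generalLinearEquiv_to_linearMap]; rfl
  rw [this, LinearEquiv.finrank_map_eq]

end Aux

/-- For a subspace `U ⊆ V` with pointwise stabilizer `W_U` and
`r = dim V − dim V^{W_U}`, the image under `Tr_{W_U}^W` of any element of `Z(ℂW_U)`
(viewed in `ℂW`) lies in `Z(ℂW) ∩ F_r(ℂW)`. -/
theorem trace_of_parabolic_center_mem
    (V : Type*) [AddCommGroup V] [Module ℂ V] [FiniteDimensional ℂ V]
    (W : Subgroup (V →ₗ[ℂ] V)ˣ) [Fintype W] (U : Submodule ℂ V)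
    (z : MonoidAlgebra ℂ (fixator W U))
    (hz : z ∈ Subalgebra.center ℂ (MonoidAlgebra ℂ (fixator W U))) :
    TrMap W (fixator W U) (subgroupAlgebraIncl W (fixator W U) z)
      ∈ Subalgebra.toSubmodule (Subalgebra.center ℂ (MonoidAlgebra ℂ W)) ⊓
          filt W (Module.finrank ℂ V -
            Module.finrank ℂ (groupFixed W (fixator W U))) := by
  classical
  have hTr : ∀ x : MonoidAlgebra ℂ W, TrMap W (fixator W U) x =
      (Nat.card (fixator W U) : ℂ)⁻¹ • ∑ g : W,
        MonoidAlgebra.of ℂ W g * (x * MonoidAlgebra.of ℂ W g⁻¹) := by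
    intro x
    simp only [TrMap, LinearMap.smul_apply, LinearMap.sum_apply, LinearMap.comp_apply,
      LinearMap.mulLeft_apply, LinearMap.mulRight_apply]
  -- centrality of the averaged sum
  have hS : ∀ x : MonoidAlgebra ℂ W,
      (∑ g : W, MonoidAlgebra.of ℂ W g * (x * MonoidAlgebra.of ℂ W g⁻¹))
        ∈ Subalgebra.center ℂ (MonoidAlgebra ℂ W) := by
    intro x
    rw [Subalgebra.mem_center_iff]
    intro b
    induction b using MonoidAlgebra.induction_on with
    | of w =>
      rw [Finset.mul_sum, Finset.sum_mul]
      refine Fintype.sum_equiv (Equiv.mulLeft w) _ _ ?_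
      intro g
      have h1 : (MonoidAlgebra.of ℂ W w⁻¹) * MonoidAlgebra.of ℂ W w = 1 := by
        rw [← map_mul, inv_mul_cancel, map_one]
      show MonoidAlgebra.of ℂ W w * (MonoidAlgebra.of ℂ W g * (x * MonoidAlgebra.of ℂ W g⁻¹))
        = MonoidAlgebra.of ℂ W (w * g) * (x * MonoidAlgebra.of ℂ W (w * g)⁻¹)
          * MonoidAlgebra.of ℂ W w
      rw [mul_inv_rev, map_mul, map_mul]
      simp only [mul_assoc, h1, mul_one]
    | add f g hf hg => rw [add_mul, mul_add, hf, hg]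
    | smul c f hf => rw [smul_mul_assoc, mul_smul_comm, hf]
  -- each conjugated summand lies in the filtration
  have hfilt : ∀ (y : MonoidAlgebra ℂ (fixator W U)) (g : W),
      MonoidAlgebra.of ℂ W g *
          (subgroupAlgebraIncl W (fixator W U) y * MonoidAlgebra.of ℂ W g⁻¹)
        ∈ filt W (Module.finrank ℂ V -
            Module.finrank ℂ (groupFixed W (fixator W U))) := by
    intro y
    induction y using MonoidAlgebra.induction_on with
    | of h =>
      intro g
      have hι_of : subgroupAlgebraIncl W (fixator W U) (MonoidAlgebra.of ℂ (fixator W U) h)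
          = MonoidAlgebra.of ℂ W (h : W) := by
        simp [subgroupAlgebraIncl, MonoidAlgebra.mapDomainAlgHom,
          MonoidAlgebra.of_apply, Finsupp.mapDomain_single]
      rw [hι_of, ← map_mul, ← map_mul]
      refine Submodule.subset_span ⟨g * (h : W) * g⁻¹, ?_, rfl⟩
      rw [cod_conj]
      have hle : groupFixed W (fixator W U) ≤ fixedSpace W (h : W) := iInf_le _ h
      have hfin : Module.finrank ℂ (groupFixed W (fixator W U))
          ≤ Module.finrank ℂ (fixedSpace W (h : W)) := Submodule.finrank_mono hle
      exact Nat.sub_le_sub_left hfin _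
    | add f f' hf hf' =>
      intro g
      rw [map_add, add_mul, mul_add]
      exact Submodule.add_mem _ (hf g) (hf' g)
    | smul c f hf =>
      intro g
      rw [map_smul, smul_mul_assoc, mul_smul_comm]
      exact Submodule.smul_mem _ _ (hf g)
  rw [Submodule.mem_inf]
  constructor
  · rw [hTr]
    exact Submodule.smul_mem _ _
      ((Subalgebra.mem_toSubmodule _).mpr (hS (subgroupAlgebraIncl W (fixator W U) z)))
  · rw [hTr]
    exact Submodule.smul_mem _ _ (Submodule.sum_mem _ fun g _ => hfilt z g)
end

section
/- For all complex numbers a, b, c, d, let J be the ideal of ℂ[x, y] generated by x³ + a x + b and y − c x² − d x − (2/3) a c, and consider the 3-dimensional ℂ-algebra A = ℂ[x, y]/J. Then the ℂ-linear endomorphism of A given by multiplication by the class of x has trace 0, and the ℂ-linear endomorphism of A given by multiplication by the class of y also has trace 0. -/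
open MvPolynomial

/-- The ideal `J = ⟨x³ + a x + b, y − c x² − d x − (2/3) a c⟩` of `ℂ[x, y]`. -/
noncomputable def hilbIdeal (a b c d : ℂ) : Ideal (MvPolynomial (Fin 2) ℂ) :=
  Ideal.span
    {X 0 ^ 3 + C a * X 0 + C b,
     X 1 - C c * X 0 ^ 2 - C d * X 0 - C (2 / 3 * a * c)}

namespace HilbAux

open Polynomial

noncomputable def g (a b : ℂ) : ℂ[X] :=
  Polynomial.X ^ 3 + Polynomial.C a * Polynomial.X + Polynomial.C b

lemma g_monic (a b : ℂ) : (g a b).Monic := by unfold g; monicity!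

lemma g_degree (a b : ℂ) : (g a b).degree = 3 := by unfold g; compute_degree!

lemma g_natDegree (a b : ℂ) : (g a b).natDegree = 3 :=
  natDegree_eq_of_degree_eq_some (g_degree a b)

lemma mod_eq {gg r s p : ℂ[X]} (hg : gg.Monic) (hdeg : r.degree < gg.degree)
    (h : p = r + gg * s) : p %ₘ gg = r := by
  rw [modByMonic_eq_of_dvd_sub hg ⟨s, by rw [h]; ring⟩,
    (modByMonic_eq_self_iff hg).mpr hdeg]

/-- the polynomial representing y -/
noncomputable def q (a c d : ℂ) : ℂ[X] :=
  Polynomial.C c * Polynomial.X ^ 2 + Polynomial.C d * Polynomial.X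
    + Polynomial.C (2 / 3 * a * c)

noncomputable def σ (a c d : ℂ) : MvPolynomial (Fin 2) ℂ →ₐ[ℂ] ℂ[X] :=
  MvPolynomial.aeval ![Polynomial.X, q a c d]

lemma σ_X0 (a c d : ℂ) : σ a c d (X 0) = Polynomial.X := by simp [σ]

lemma σ_X1 (a c d : ℂ) : σ a c d (X 1) = q a c d := by simp [σ]

/-- `AdjoinRoot.mk` as an `ℂ`-algebra hom. -/
noncomputable def mkAlg (a b : ℂ) : ℂ[X] →ₐ[ℂ] AdjoinRoot (g a b) :=
  { AdjoinRoot.mk (g a b) with commutes' := fun _ => rfl }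

lemma mkAlg_apply (a b : ℂ) (p : ℂ[X]) : mkAlg a b p = AdjoinRoot.mk (g a b) p := rfl

noncomputable def φ (a b c d : ℂ) : MvPolynomial (Fin 2) ℂ →ₐ[ℂ] AdjoinRoot (g a b) :=
  (mkAlg a b).comp (σ a c d)

lemma φ_apply (a b c d : ℂ) (p : MvPolynomial (Fin 2) ℂ) :
    φ a b c d p = AdjoinRoot.mk (g a b) (σ a c d p) := rfl

lemma φ_vanish (a b c d : ℂ) : ∀ p ∈ hilbIdeal a b c d, φ a b c d p = 0 := by
  intro p hp
  have : hilbIdeal a b c d ≤ RingHom.ker (φ a b c d) := by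
    rw [hilbIdeal, Ideal.span_le]
    rintro p (rfl | rfl) <;> simp only [SetLike.mem_coe, RingHom.mem_ker, φ_apply]
    · have : σ a c d (X 0 ^ 3 + MvPolynomial.C a * X 0 + MvPolynomial.C b) = g a b := by
        simp only [map_add, map_mul, map_pow, AlgHom.commutes, σ_X0]
        rw [g]
        norm_num [Polynomial.algebraMap_eq]
      rw [this, AdjoinRoot.mk_self]
    · have : σ a c d (X 1 - MvPolynomial.C c * X 0 ^ 2 - MvPolynomial.C d * X 0 - MvPolynomial.C (2 / 3 * a * c)) = 0 := by
        simp only [map_sub, map_mul, map_pow, AlgHom.commutes, σ_X0, σ_X1]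
        rw [q]
        norm_num [Polynomial.algebraMap_eq]
        ring
      rw [this, map_zero]
  exact this hp

noncomputable def φbar (a b c d : ℂ) :
    (MvPolynomial (Fin 2) ℂ ⧸ hilbIdeal a b c d) →ₐ[ℂ] AdjoinRoot (g a b) :=
  Ideal.Quotient.liftₐ (hilbIdeal a b c d) (φ a b c d) (φ_vanish a b c d)

lemma φbar_mk (a b c d : ℂ) (p : MvPolynomial (Fin 2) ℂ) :
    φbar a b c d (Ideal.Quotient.mk (hilbIdeal a b c d) p)
      = AdjoinRoot.mk (g a b) (σ a c d p) := by
  rw [φbar, Ideal.Quotient.liftₐ_apply]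
  rfl

lemma gen1_mem (a b c d : ℂ) :
    X 0 ^ 3 + MvPolynomial.C a * X 0 + MvPolynomial.C b ∈ hilbIdeal a b c d :=
  Ideal.subset_span (by left; rfl)

lemma gen2_mem (a b c d : ℂ) :
    X 1 - MvPolynomial.C c * X 0 ^ 2 - MvPolynomial.C d * X 0 - MvPolynomial.C (2 / 3 * a * c) ∈ hilbIdeal a b c d :=
  Ideal.subset_span (by right; rfl)

lemma aeval_x_g (a b c d : ℂ) :
    Polynomial.aeval (Ideal.Quotient.mk (hilbIdeal a b c d) (X 0)) (g a b) = 0 := by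
  rw [show Ideal.Quotient.mk (hilbIdeal a b c d) (X 0)
      = Ideal.Quotient.mkₐ ℂ (hilbIdeal a b c d) (X 0) from rfl,
    Polynomial.aeval_algHom_apply]
  have : Polynomial.aeval (X 0 : MvPolynomial (Fin 2) ℂ) (g a b)
      = X 0 ^ 3 + MvPolynomial.C a * X 0 + MvPolynomial.C b := by
    simp [g, MvPolynomial.algebraMap_eq]
  rw [this, Ideal.Quotient.mkₐ_eq_mk]
  exact (Ideal.Quotient.eq_zero_iff_mem).mpr (gen1_mem a b c d)

noncomputable def ψ (a b c d : ℂ) :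
    AdjoinRoot (g a b) →ₐ[ℂ] (MvPolynomial (Fin 2) ℂ ⧸ hilbIdeal a b c d) :=
  AdjoinRoot.liftAlgHom (g a b) (Algebra.ofId ℂ _) (Ideal.Quotient.mk (hilbIdeal a b c d) (X 0))
    (by rw [← aeval_x_g a b c d]; rfl)

lemma comp1 (a b c d : ℂ) :
    (φbar a b c d).comp (ψ a b c d) = AlgHom.id ℂ (AdjoinRoot (g a b)) := by
  apply AdjoinRoot.algHom_ext
  simp only [AlgHom.coe_comp, Function.comp_apply, AlgHom.coe_id, id_eq]
  rw [ψ, AdjoinRoot.liftAlgHom_root, φbar_mk, σ_X0, AdjoinRoot.mk_X]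

lemma comp2 (a b c d : ℂ) :
    (ψ a b c d).comp (φbar a b c d)
      = AlgHom.id ℂ (MvPolynomial (Fin 2) ℂ ⧸ hilbIdeal a b c d) := by
  apply Ideal.Quotient.algHom_ext
  apply MvPolynomial.algHom_ext
  intro i
  fin_cases i <;>
    simp only [Fin.zero_eta, Fin.mk_one, AlgHom.coe_comp, Function.comp_apply,
      Ideal.Quotient.mkₐ_eq_mk, AlgHom.coe_id, id_eq, φbar_mk, σ_X0, σ_X1]
  · rw [AdjoinRoot.mk_X, ψ, AdjoinRoot.liftAlgHom_root]
  · rw [ψ, AdjoinRoot.liftAlgHom_mk]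
    change Polynomial.aeval (Ideal.Quotient.mk (hilbIdeal a b c d) (X 0)) (q a c d) = _
    rw [show Ideal.Quotient.mk (hilbIdeal a b c d) (X 0)
        = Ideal.Quotient.mkₐ ℂ (hilbIdeal a b c d) (X 0) from rfl,
      Polynomial.aeval_algHom_apply]
    have : Polynomial.aeval (X 0 : MvPolynomial (Fin 2) ℂ) (q a c d)
        = MvPolynomial.C c * X 0 ^ 2 + MvPolynomial.C d * X 0
          + MvPolynomial.C (2 / 3 * a * c) := by
      simp [q, MvPolynomial.algebraMap_eq]
    rw [this, Ideal.Quotient.mkₐ_eq_mk, Ideal.Quotient.eq]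
    have h := neg_mem (gen2_mem a b c d)
    convert h using 1
    ring

noncomputable def e (a b c d : ℂ) :
    (MvPolynomial (Fin 2) ℂ ⧸ hilbIdeal a b c d) ≃ₐ[ℂ] AdjoinRoot (g a b) :=
  AlgEquiv.ofAlgHom (φbar a b c d) (ψ a b c d) (comp1 a b c d) (comp2 a b c d)

lemma e_apply (a b c d : ℂ) (u : MvPolynomial (Fin 2) ℂ ⧸ hilbIdeal a b c d) :
    e a b c d u = φbar a b c d u := rfl

/-- trace of multiplication by `mk g f` on `AdjoinRoot g` as a sum of coefficients of mods. -/
lemma trace_mulLeft_mk (a b : ℂ) (f : ℂ[X]) :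
    LinearMap.trace ℂ (AdjoinRoot (g a b))
      (LinearMap.mulLeft ℂ (AdjoinRoot.mk (g a b) f)) =
    ∑ i ∈ Finset.range 3, ((f * Polynomial.X ^ i) %ₘ g a b).coeff i := by
  classical
  rw [LinearMap.trace_eq_matrix_trace ℂ (AdjoinRoot.powerBasis' (g_monic a b)).basis,
    Matrix.trace]
  have key : ∀ i : Fin (AdjoinRoot.powerBasis' (g_monic a b)).dim,
      Matrix.diag (LinearMap.toMatrix (AdjoinRoot.powerBasis' (g_monic a b)).basis
        (AdjoinRoot.powerBasis' (g_monic a b)).basis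
        (LinearMap.mulLeft ℂ (AdjoinRoot.mk (g a b) f))) i
      = (fun j : ℕ => ((f * Polynomial.X ^ j) %ₘ g a b).coeff j) (i : ℕ) := by
    intro i
    rw [Matrix.diag_apply, LinearMap.toMatrix_apply, LinearMap.mulLeft_apply,
      (AdjoinRoot.powerBasis' (g_monic a b)).basis_eq_pow i]
    rw [show (AdjoinRoot.powerBasis' (g_monic a b)).gen = AdjoinRoot.mk (g a b) Polynomial.X
        from rfl, ← map_pow, ← map_mul]
    exact (AdjoinRoot.powerBasisAux'_repr_apply_to_fun (g_monic a b) _ i).trans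
      (by rw [AdjoinRoot.modByMonicHom_mk])
  rw [Finset.sum_congr rfl (fun i _ => key i),
    Fin.sum_univ_eq_sum_range (fun j : ℕ => ((f * Polynomial.X ^ j) %ₘ g a b).coeff j)]
  rw [show (AdjoinRoot.powerBasis' (g_monic a b)).dim = 3 from g_natDegree a b]

lemma deg_lt {r : ℂ[X]} (a b : ℂ) (h : r.degree ≤ 2) : r.degree < (g a b).degree := by
  rw [g_degree]
  exact lt_of_le_of_lt h (by norm_num)

lemma trace_x (a b : ℂ) :
    LinearMap.trace ℂ (AdjoinRoot (g a b))
      (LinearMap.mulLeft ℂ (AdjoinRoot.mk (g a b) Polynomial.X)) = 0 := by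
  rw [trace_mulLeft_mk]
  rw [Finset.sum_range_succ, Finset.sum_range_succ, Finset.sum_range_one]
  have h0 : (Polynomial.X * Polynomial.X ^ 0 : ℂ[X]) %ₘ g a b = Polynomial.X :=
    mod_eq (g_monic a b) (deg_lt a b (by compute_degree!)) (s := 0) (by ring)
  have h1 : (Polynomial.X * Polynomial.X ^ 1 : ℂ[X]) %ₘ g a b = Polynomial.X ^ 2 :=
    mod_eq (g_monic a b) (deg_lt a b (by compute_degree!)) (s := 0) (by ring)
  have h2 : (Polynomial.X * Polynomial.X ^ 2 : ℂ[X]) %ₘ g a b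
      = -(Polynomial.C a * Polynomial.X + Polynomial.C b) :=
    mod_eq (g_monic a b) (deg_lt a b (by compute_degree!)) (s := 1) (by rw [g]; ring)
  rw [h0, h1, h2]
  simp [Polynomial.coeff_X, Polynomial.coeff_C]

lemma trace_y (a b c d : ℂ) :
    LinearMap.trace ℂ (AdjoinRoot (g a b))
      (LinearMap.mulLeft ℂ (AdjoinRoot.mk (g a b) (q a c d))) = 0 := by
  rw [trace_mulLeft_mk]
  rw [Finset.sum_range_succ, Finset.sum_range_succ, Finset.sum_range_one]
  have h0 : (q a c d * Polynomial.X ^ 0) %ₘ g a b = q a c d :=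
    mod_eq (g_monic a b) (deg_lt a b (by rw [q]; compute_degree!)) (s := 0) (by ring)
  have h1 : (q a c d * Polynomial.X ^ 1) %ₘ g a b
      = Polynomial.C d * Polynomial.X ^ 2 + Polynomial.C (2/3*a*c - c*a) * Polynomial.X
        - Polynomial.C (c*b) :=
    mod_eq (g_monic a b) (deg_lt a b (by compute_degree!)) (s := Polynomial.C c)
      (by rw [g, q]; simp only [map_sub, map_add, map_mul]; ring)
  have h2 : (q a c d * Polynomial.X ^ 2) %ₘ g a b
      = Polynomial.C (2/3*a*c - c*a) * Polynomial.X ^ 2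
        - Polynomial.C (c*b + d*a) * Polynomial.X - Polynomial.C (d*b) :=
    mod_eq (g_monic a b) (deg_lt a b (by compute_degree!))
      (s := Polynomial.C c * Polynomial.X + Polynomial.C d)
      (by rw [g, q]; simp only [map_sub, map_add, map_mul]; ring)
  rw [h0, h1, h2, q]
  simp only [Polynomial.coeff_add, Polynomial.coeff_sub, Polynomial.coeff_C_mul,
    Polynomial.coeff_X_pow, Polynomial.coeff_X, Polynomial.coeff_C]
  norm_num
  ring

lemma conj_mulLeft {A B : Type*} [CommRing A] [CommRing B] [Algebra ℂ A] [Algebra ℂ B]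
    (e : A ≃ₐ[ℂ] B) (u : A) :
    e.toLinearEquiv.conj (LinearMap.mulLeft ℂ u) = LinearMap.mulLeft ℂ (e u) := by
  ext v
  simp only [LinearEquiv.conj_apply, LinearMap.coe_comp, LinearEquiv.coe_coe,
    Function.comp_apply, LinearMap.mulLeft_apply, AlgEquiv.toLinearEquiv_apply, map_mul]
  exact congrArg (e u * ·) (e.apply_symm_apply v)

end HilbAux

/-- On `A = ℂ[x, y]/J`, multiplication by the class of `x` and multiplication by the
class of `y` are ℂ-linear endomorphisms of trace `0` (the subscheme defined by `J` has
center of mass at the origin). -/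
theorem trace_mul_eq_zero_on_hilb_quotient (a b c d : ℂ) :
    LinearMap.trace ℂ (MvPolynomial (Fin 2) ℂ ⧸ hilbIdeal a b c d)
        (LinearMap.mulLeft ℂ (Ideal.Quotient.mk (hilbIdeal a b c d) (X 0))) = 0 ∧
    LinearMap.trace ℂ (MvPolynomial (Fin 2) ℂ ⧸ hilbIdeal a b c d)
        (LinearMap.mulLeft ℂ (Ideal.Quotient.mk (hilbIdeal a b c d) (X 1))) = 0 := by
  have key : ∀ u : MvPolynomial (Fin 2) ℂ ⧸ hilbIdeal a b c d,
      LinearMap.trace ℂ _ (LinearMap.mulLeft ℂ u)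
      = LinearMap.trace ℂ (AdjoinRoot (HilbAux.g a b))
          (LinearMap.mulLeft ℂ (HilbAux.e a b c d u)) := by
    intro u
    rw [← HilbAux.conj_mulLeft (HilbAux.e a b c d) u, LinearMap.trace_conj']
  have e_mk : ∀ p : MvPolynomial (Fin 2) ℂ,
      HilbAux.e a b c d (Ideal.Quotient.mk (hilbIdeal a b c d) p)
      = HilbAux.φbar a b c d (Ideal.Quotient.mk (hilbIdeal a b c d) p) :=
    fun p => HilbAux.e_apply a b c d _
  constructor
  · rw [key, e_mk, HilbAux.φbar_mk, HilbAux.σ_X0]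
    exact HilbAux.trace_x a b
  · rw [key, e_mk, HilbAux.φbar_mk, HilbAux.σ_X1]
    exact HilbAux.trace_y a b c d
end
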